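/- arXiv:1712.01980 — 2 statements merged into one kernel-verified Lean document; each statement's English description precedes it below -/
import Mathlib

section
/- (Universality of dual-indeterminate polynomials) For any commutative semiring K and any function f : X ∪ X̄ → K such that f(p)·f(p̄) = 0 for all p ∈ X, there exists a unique semiring homomorphism h : ℕ[X,X̄] → K such that h(x) = f(x) for all x ∈ X ∪ X̄ (where elements of X ∪ X̄ are identified with their images in ℕ[X,X̄]). -/
open MvPolynomial

/-- Generating relation for the dual-indeterminate congruence: `p · p̄ = 0` for `p ∈ X`
(we realize the set of tokens `X ∪ X̄` as the sum type `X ⊕ X`, with `Sum.inl p = p`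
and `Sum.inr p = p̄`). -/
def pairRel (X : Type) : MvPolynomial (X ⊕ X) ℕ → MvPolynomial (X ⊕ X) ℕ → Prop :=
  fun a b => b = 0 ∧ ∃ p : X, a = MvPolynomial.X (Sum.inl p) * MvPolynomial.X (Sum.inr p)

/-- The semiring congruence on `ℕ[X ∪ X̄]` generated by `p · p̄ = 0` for all `p ∈ X`. -/
noncomputable def dualCon (X : Type) : RingCon (MvPolynomial (X ⊕ X) ℕ) := ringConGen (pairRel X)

/-- `ℕ[X,X̄]`: the commutative semiring of dual-indeterminate polynomials, i.e. the
quotient of the polynomial semiring `ℕ[X ∪ X̄]` by the congruence `p · p̄ = 0`. -/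
abbrev DualPoly (X : Type) := (dualCon X).Quotient

/-- The image in `ℕ[X,X̄]` of a provenance token `x ∈ X ∪ X̄`. -/
noncomputable def tok {X : Type} (x : X ⊕ X) : DualPoly X :=
  ((MvPolynomial.X x : MvPolynomial (X ⊕ X) ℕ) : DualPoly X)

open Classical in
/-- Deleting from a polynomial all monomials that contain a pair of complementary tokens. -/
noncomputable def clean {X : Type} (q : MvPolynomial (X ⊕ X) ℕ) : MvPolynomial (X ⊕ X) ℕ :=
  ∑ m ∈ q.support.filter
      (fun m => ¬ ∃ p : X, m (Sum.inl p) ≠ 0 ∧ m (Sum.inr p) ≠ 0),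
    MvPolynomial.monomial m (q.coeff m)

/-- A representative polynomial of an element of `ℕ[X,X̄]`. -/
noncomputable def qrep {X : Type} (q : DualPoly X) : MvPolynomial (X ⊕ X) ℕ :=
  (Quot.exists_rep q).choose

/-- The coefficient of the monomial `m` in a dual-indeterminate polynomial:
the coefficient of `m` in the canonical (clean) representative. -/
noncomputable def coeffQ {X : Type} (q : DualPoly X) (m : (X ⊕ X) →₀ ℕ) : ℕ :=
  (clean (qrep q)).coeff m

/-- The sum of the monomial coefficients of a dual-indeterminate polynomial. -/
noncomputable def sumCoeff {X : Type} (q : DualPoly X) : ℕ :=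
  ∑ m ∈ (clean (qrep q)).support, (clean (qrep q)).coeff m


def kerRC {R K : Type*} [NonAssocSemiring R] [NonAssocSemiring K] (g : R →+* K) : RingCon R where
  r a b := g a = g b
  iseqv := ⟨fun _ => rfl, Eq.symm, Eq.trans⟩
  mul' {w x y z} h1 h2 := show g (w * y) = g (x * z) by
    rw [map_mul, map_mul, (h1 : g w = g x), (h2 : g y = g z)]
  add' {w x y z} h1 h2 := show g (w + y) = g (x + z) by
    rw [map_add, map_add, (h1 : g w = g x), (h2 : g y = g z)]

theorem kerRC_iff {R K : Type*} [NonAssocSemiring R] [NonAssocSemiring K] {g : R →+* K}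
    {a b : R} : kerRC g a b ↔ g a = g b := Iff.rfl

/-- universality of dual-indeterminate polynomials: for any commutative
semiring `K` and any `f : X ∪ X̄ → K` with `f(p)·f(p̄) = 0` for all `p ∈ X`, there is
a unique semiring homomorphism `h : ℕ[X,X̄] → K` extending `f` on the tokens. -/
theorem dualPoly_universal {X K : Type} [CommSemiring K] (f : X ⊕ X → K)
    (hf : ∀ p : X, f (Sum.inl p) * f (Sum.inr p) = 0) :
    ∃! h : DualPoly X →+* K, ∀ x : X ⊕ X, h (tok x) = f x := by
  set g : MvPolynomial (X ⊕ X) ℕ →+* K := eval₂Hom (Nat.castRingHom K) f with hg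
  have hle : dualCon X ≤ kerRC g := by
    apply RingCon.ringConGen_le.mpr
    rintro a b ⟨rfl, p, rfl⟩
    refine kerRC_iff.mpr ?_
    simp [hg, hf p]
  refine ⟨{ toFun := Quotient.lift g (fun a b hab => kerRC_iff.mp (hle hab)),
            map_one' := by show g 1 = 1; simp,
            map_mul' := fun a b => Quotient.inductionOn₂ a b (fun a b => by
              show g (a * b) = g a * g b; simp),
            map_zero' := by show g 0 = 0; simp,
            map_add' := fun a b => Quotient.inductionOn₂ a b (fun a b => by
              show g (a + b) = g a + g b; simp) }, ?_, ?_⟩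
  · intro x
    show g (MvPolynomial.X x) = f x
    simp [hg]
  · intro h' hh'
    have key : h'.comp (dualCon X).mk' =
        ({ toFun := Quotient.lift g (fun a b hab => kerRC_iff.mp (hle hab)),
            map_one' := by show g 1 = 1; simp,
            map_mul' := fun a b => Quotient.inductionOn₂ a b (fun a b => by
              show g (a * b) = g a * g b; simp),
            map_zero' := by show g 0 = 0; simp,
            map_add' := fun a b => Quotient.inductionOn₂ a b (fun a b => by
              show g (a + b) = g a + g b; simp) } : DualPoly X →+* K).comp (dualCon X).mk' := by
      apply MvPolynomial.ringHom_ext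
      · intro n
        simp [MvPolynomial.C_eq_coe_nat, map_natCast]
      · intro i
        show h' (tok i) = g (MvPolynomial.X i)
        rw [hh' i]; simp [hg]
    refine RingHom.ext fun q => ?_
    obtain ⟨a, rfl⟩ := Quotient.exists_rep q
    exact RingHom.congr_fun key a
end

section
/- Two polynomials 𝔭, 𝔮 ∈ ℕ[X ∪ X̄] are congruent modulo the congruence generated by {p·p̄ = 0 : p ∈ X} if and only if they become identical after deleting from each of them all monomials that contain a pair of complementary tokens (i.e., monomials in which both p and p̄ occur for some p ∈ X). Consequently, the congruence classes in ℕ[X,X̄] are in one-to-one correspondence with those polynomials in ℕ[X ∪ X̄] none of whose monomials contain complementary tokens. -/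
open MvPolynomial

def good {X : Type} (m : (X ⊕ X) →₀ ℕ) : Prop :=
  ¬ ∃ p : X, m (Sum.inl p) ≠ 0 ∧ m (Sum.inr p) ≠ 0

variable {X : Type}

open Classical in
lemma coeff_clean (q : MvPolynomial (X ⊕ X) ℕ) (m : (X ⊕ X) →₀ ℕ) :
    (clean q).coeff m = if good m then q.coeff m else 0 := by
  classical
  unfold clean good
  rw [MvPolynomial.coeff_sum]
  simp only [MvPolynomial.coeff_monomial]
  rw [Finset.sum_ite_eq']
  by_cases h : (¬ ∃ p : X, m (Sum.inl p) ≠ 0 ∧ m (Sum.inr p) ≠ 0) <;>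
    by_cases h2 : q.coeff m = 0 <;>
    (simp [h, h2, MvPolynomial.mem_support_iff]; try (push_neg at h; exact h))

lemma clean_add (p q : MvPolynomial (X ⊕ X) ℕ) : clean (p + q) = clean p + clean q := by
  classical
  ext m
  simp only [coeff_clean, MvPolynomial.coeff_add]
  split <;> simp

lemma clean_eq_self_of_good (p : MvPolynomial (X ⊕ X) ℕ)
    (h : ∀ m ∈ p.support, good m) : clean p = p := by
  classical
  ext m
  rw [coeff_clean]
  split_ifs with hg
  · rfl
  · by_cases h0 : p.coeff m = 0
    · omega
    · exact absurd (h m (MvPolynomial.mem_support_iff.mpr h0)) hg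

lemma clean_eq_zero_of_bad (p : MvPolynomial (X ⊕ X) ℕ)
    (h : ∀ m ∈ p.support, ¬ good m) : clean p = 0 := by
  classical
  ext m
  rw [coeff_clean]
  split_ifs with hg
  · by_cases h0 : p.coeff m = 0
    · simpa using h0
    · exact absurd hg (h m (MvPolynomial.mem_support_iff.mpr h0))
  · simp

lemma bad_add {m n : (X ⊕ X) →₀ ℕ} (h : ¬ good m) : ¬ good (m + n) := by
  unfold good at *
  push_neg at *
  obtain ⟨p, h1, h2⟩ := h
  exact ⟨p, by simp [Finsupp.add_apply]; omega, by simp [Finsupp.add_apply]; omega⟩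

open Classical in
noncomputable def dirt (q : MvPolynomial (X ⊕ X) ℕ) : MvPolynomial (X ⊕ X) ℕ :=
  ∑ m ∈ q.support.filter (fun m => ¬ good m), MvPolynomial.monomial m (q.coeff m)

open Classical in
lemma coeff_dirt (q : MvPolynomial (X ⊕ X) ℕ) (m : (X ⊕ X) →₀ ℕ) :
    (dirt q).coeff m = if good m then 0 else q.coeff m := by
  classical
  unfold dirt
  rw [MvPolynomial.coeff_sum]
  simp only [MvPolynomial.coeff_monomial]
  rw [Finset.sum_ite_eq']
  by_cases h : good m <;> by_cases h2 : q.coeff m = 0 <;>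
    simp [h, h2, MvPolynomial.mem_support_iff]

lemma clean_add_dirt (q : MvPolynomial (X ⊕ X) ℕ) : clean q + dirt q = q := by
  classical
  ext m
  simp only [MvPolynomial.coeff_add, coeff_clean, coeff_dirt]
  split <;> simp

lemma dirt_support_bad (q : MvPolynomial (X ⊕ X) ℕ) :
    ∀ m ∈ (dirt q).support, ¬ good m := by
  classical
  intro m hm
  rw [MvPolynomial.mem_support_iff, coeff_dirt] at hm
  by_contra h
  simp [h] at hm

lemma clean_mul_bad_left (f g : MvPolynomial (X ⊕ X) ℕ)
    (hf : ∀ m ∈ f.support, ¬ good m) : clean (f * g) = 0 := by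
  classical
  apply clean_eq_zero_of_bad
  intro m hm
  have := MvPolynomial.support_mul f g hm
  rw [Finset.mem_add] at this
  obtain ⟨a, ha, b, hb, rfl⟩ := this
  exact bad_add (hf a ha)

lemma clean_mul_left (f g : MvPolynomial (X ⊕ X) ℕ) :
    clean (f * g) = clean (clean f * g) := by
  classical
  conv_lhs => rw [← clean_add_dirt f]
  rw [add_mul, clean_add, clean_mul_bad_left (dirt f) g (dirt_support_bad f), add_zero]

lemma clean_mul (f g : MvPolynomial (X ⊕ X) ℕ) :
    clean (f * g) = clean (clean f * clean g) := by
  rw [clean_mul_left, mul_comm, clean_mul_left, mul_comm]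

/-- The congruence "have equal clean parts". -/
def cleanCon (X : Type) : RingCon (MvPolynomial (X ⊕ X) ℕ) where
  r a b := clean a = clean b
  iseqv := ⟨fun _ => rfl, Eq.symm, Eq.trans⟩
  mul' {a b c d} h1 h2 := by
    rw [clean_mul, h1, h2, ← clean_mul]
  add' {a b c d} h1 h2 := by
    rw [clean_add, h1, h2, ← clean_add]

lemma clean_pair (p : X) :
    clean (MvPolynomial.X (Sum.inl p) * MvPolynomial.X (Sum.inr p) : MvPolynomial (X ⊕ X) ℕ) = 0 := by
  classical
  apply clean_eq_zero_of_bad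
  intro m hm
  rw [MvPolynomial.X, MvPolynomial.X, MvPolynomial.monomial_mul] at hm
  rw [MvPolynomial.mem_support_iff, MvPolynomial.coeff_monomial] at hm
  split at hm
  · subst_vars
    unfold good
    push_neg
    exact ⟨p, by simp [Finsupp.single_apply], by simp [Finsupp.single_apply]⟩
  · simp at hm

lemma dualCon_clean_eq {p q : MvPolynomial (X ⊕ X) ℕ} (h : dualCon X p q) :
    clean p = clean q := by
  refine (RingCon.ringConGen_le (c := cleanCon X)).mpr ?_ h
  rintro a b ⟨rfl, p, rfl⟩
  show clean _ = clean 0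
  rw [clean_pair, clean_eq_zero_of_bad 0 (by simp)]

lemma dualCon_mono_zero {m : (X ⊕ X) →₀ ℕ} (c : ℕ) (h : ¬ good m) :
    dualCon X (MvPolynomial.monomial m c) 0 := by
  classical
  unfold good at h
  push_neg at h
  obtain ⟨p, h1, h2⟩ := h
  set s : (X ⊕ X) →₀ ℕ := Finsupp.single (Sum.inl p) 1 + Finsupp.single (Sum.inr p) 1 with hs
  have hle : s ≤ m := by
    intro x
    rcases x with x | x <;> simp [hs, Finsupp.add_apply, Finsupp.single_apply] <;>
      split <;> subst_vars <;> omega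
  have hdecomp : (MvPolynomial.monomial m c : MvPolynomial (X ⊕ X) ℕ) =
      (MvPolynomial.X (Sum.inl p) * MvPolynomial.X (Sum.inr p)) * MvPolynomial.monomial (m - s) c := by
    rw [MvPolynomial.X, MvPolynomial.X, MvPolynomial.monomial_mul, MvPolynomial.monomial_mul]
    congr 1
    · rw [← hs, add_tsub_cancel_of_le hle]
    · simp
  have hbase : dualCon X (MvPolynomial.X (Sum.inl p) * MvPolynomial.X (Sum.inr p)) 0 :=
    RingConGen.Rel.of _ _ ⟨rfl, p, rfl⟩
  have := (dualCon X).mul hbase ((dualCon X).refl (MvPolynomial.monomial (m - s) c))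
  rw [zero_mul, ← hdecomp] at this
  exact this

lemma dualCon_clean (f : MvPolynomial (X ⊕ X) ℕ) : dualCon X f (clean f) := by
  classical
  have hd : dualCon X (dirt f) 0 := by
    unfold dirt
    refine Finset.sum_induction _ (fun x => dualCon X x 0) ?_ ((dualCon X).refl 0) ?_
    · intro a b ha hb
      have := (dualCon X).add ha hb
      rwa [add_zero] at this
    · intro m hm
      exact dualCon_mono_zero _ (by simp at hm; exact hm.2)
  have := (dualCon X).add ((dualCon X).refl (clean f)) hd
  rwa [add_zero, clean_add_dirt] at this

lemma clean_idem (f : MvPolynomial (X ⊕ X) ℕ) : clean (clean f) = clean f := by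
  apply clean_eq_self_of_good
  intro m hm
  rw [MvPolynomial.mem_support_iff, coeff_clean] at hm
  by_contra h
  simp [h] at hm


/-- two polynomials in `ℕ[X ∪ X̄]` are congruent modulo the congruence
generated by `p·p̄ = 0` iff they become identical after deleting all monomials
containing complementary tokens; consequently the congruence classes are in one-to-one
correspondence with the polynomials none of whose monomials contain complementary
tokens. -/
theorem dualCon_iff_clean_eq (X : Type) :
    (∀ 𝔭 𝔮 : MvPolynomial (X ⊕ X) ℕ, dualCon X 𝔭 𝔮 ↔ clean 𝔭 = clean 𝔮) ∧
    ∀ z : DualPoly X, ∃! 𝔭 : MvPolynomial (X ⊕ X) ℕ,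
      (∀ m ∈ 𝔭.support, ¬ ∃ p : X, m (Sum.inl p) ≠ 0 ∧ m (Sum.inr p) ≠ 0) ∧
      (𝔭 : DualPoly X) = z := by
  have key : ∀ 𝔭 𝔮 : MvPolynomial (X ⊕ X) ℕ, dualCon X 𝔭 𝔮 ↔ clean 𝔭 = clean 𝔮 := by
    intro p q
    constructor
    · exact dualCon_clean_eq
    · intro h
      exact (dualCon X).trans (dualCon_clean p) (h ▸ (dualCon X).symm (dualCon_clean q))
  refine ⟨key, ?_⟩
  intro z
  obtain ⟨r, hr⟩ := Quot.exists_rep z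
  refine ⟨clean r, ⟨?_, ?_⟩, ?_⟩
  · intro m hm hex
    rw [MvPolynomial.mem_support_iff, coeff_clean,
      if_neg (show ¬ good m from fun hg => hg hex)] at hm
    exact hm rfl
  · have h1 : ((clean r : MvPolynomial (X ⊕ X) ℕ) : DualPoly X) = (r : DualPoly X) :=
      (dualCon X).eq.mpr ((dualCon X).symm (dualCon_clean r))
    rw [h1, ← hr]
    rfl
  · intro q ⟨hq1, hq2⟩
    have h2 : (q : DualPoly X) = ((clean r : MvPolynomial (X ⊕ X) ℕ) : DualPoly X) := by
      rw [hq2, ← hr]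
      exact ((dualCon X).eq.mpr ((dualCon X).symm (dualCon_clean r))).symm
    have h3 : dualCon X q (clean r) := (dualCon X).eq.mp h2
    have := dualCon_clean_eq h3
    rwa [clean_idem, clean_eq_self_of_good q hq1] at this
end
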